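/- Let ω̂^{(X,t)} denote adjoint-caloric measure of a δ-Reifenberg flat parabolic domain Ω (δ small), and suppose the boundary growth estimate 1 − ω̂^{(X,t)}(Δ_{2^{−j}}(Q,τ)) ≤ C 2^{3j/4} r^{3/4} holds for ‖(X,t)−(Q,τ)‖ ≤ r and all j with 2^{−j} ≥ 4r. If h is parabolically Hölder continuous with exponent α ∈ (0,1), α ≠ 3/4, on ∂Ω, then for ‖(X,t)−(Q,τ)‖ ≤ r < 1/4: ∫_{Δ_{2R}(Q,τ)} h dω̂^{(X,t)} ≤ h(Q,τ) + C r^{min{3/4, α}}, where C depends on R, the Hölder norm of h, n, and δ. -/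

import Mathlib

open MeasureTheory Real Set Filter Topology
open scoped ENNReal NNReal BigOperators

noncomputable section

abbrev Pt (n : ℕ) := EuclideanSpace ℝ (Fin n) × ℝ

/-- Parabolic distance between points of `ℝ^n × ℝ`. -/
def pdist {n : ℕ} (p q : Pt n) : ℝ := dist p.1 q.1 + Real.sqrt |p.2 - q.2|

/-- The parabolic cylinder of radius `R` centered at `c`. -/
def pcyl {n : ℕ} (c : Pt n) (R : ℝ) : Set (Pt n) :=
  {p | dist p.1 c.1 < R ∧ |p.2 - c.2| < R ^ 2}

lemma two_rpow_neg_nat (j : ℕ) : (2:ℝ) ^ (-(j:ℝ)) = (1/2:ℝ) ^ j := by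
  rw [Real.rpow_neg (by norm_num), Real.rpow_natCast, one_div, inv_pow]

lemma measurableSet_pcyl {n : ℕ} (c : Pt n) (R : ℝ) : MeasurableSet (pcyl c R) := by
  have h1 : IsOpen {p : Pt n | dist p.1 c.1 < R} :=
    isOpen_lt (continuous_fst.dist continuous_const) continuous_const
  have h2 : IsOpen {p : Pt n | |p.2 - c.2| < R ^ 2} :=
    isOpen_lt ((continuous_snd.sub continuous_const).abs) continuous_const
  exact (h1.inter h2).measurableSet

lemma pcyl_mono {n : ℕ} (c : Pt n) {r₁ r₂ : ℝ} (h0 : 0 ≤ r₁) (h : r₁ ≤ r₂) :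
    pcyl c r₁ ⊆ pcyl c r₂ := fun p hp =>
  ⟨hp.1.trans_le h, hp.2.trans_le (by nlinarith)⟩

lemma pdist_nonneg' {n : ℕ} (p q : Pt n) : 0 ≤ pdist p q :=
  add_nonneg dist_nonneg (Real.sqrt_nonneg _)

lemma pdist_le_of_mem_pcyl {n : ℕ} {c p : Pt n} {ρ : ℝ} (hρ : 0 ≤ ρ)
    (hp : p ∈ pcyl c ρ) : pdist p c ≤ 2 * ρ := by
  have h1 : dist p.1 c.1 < ρ := hp.1
  have h2 : Real.sqrt |p.2 - c.2| < ρ := by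
    have := Real.sqrt_lt_sqrt (abs_nonneg _) hp.2
    rwa [show ρ ^ 2 = ρ * ρ by ring, Real.sqrt_mul_self hρ] at this
  unfold pdist; linarith

lemma integrableOn_of_bound {X : Type*} [MeasurableSpace X] (μ : Measure X)
    [IsFiniteMeasure μ] (f : X → ℝ) (s : Set X) (hs : MeasurableSet s)
    (hf : Measurable f) (M : ℝ) (hb : ∀ x ∈ s, |f x| ≤ M) : IntegrableOn f s μ := by
  refine ⟨hf.aestronglyMeasurable, ?_⟩
  apply HasFiniteIntegral.of_bounded (C := M)
  filter_upwards [ae_restrict_mem hs] with x hx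
  simpa using hb x hx

lemma integral_decomp {X : Type*} [MeasurableSpace X] (μ : Measure X) (f : X → ℝ)
    (B : ℕ → Set X) (hBm : ∀ j, MeasurableSet (B j)) (hBs : ∀ j, B (j+1) ⊆ B j)
    (hint : ∀ j, IntegrableOn f (B j) μ) (n : ℕ) :
    ∫ x in B 0, f x ∂μ =
      (∑ j ∈ Finset.range n, ∫ x in B j \ B (j+1), f x ∂μ) + ∫ x in B n, f x ∂μ := by
  induction n with
  | zero => simp
  | succ n ih =>
    rw [Finset.sum_range_succ, ih]
    have hu : ∫ x in B n, f x ∂μ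
        = ∫ x in B n \ B (n+1), f x ∂μ + ∫ x in B (n+1), f x ∂μ := by
      rw [← setIntegral_union disjoint_sdiff_self_left (hBm (n+1))
        ((hint n).mono_set diff_subset) (hint (n+1)), Set.diff_union_of_subset (hBs n)]
    rw [hu]; ring

lemma geom_key (α : ℝ) (hαne : α ≠ 3/4) :
    ∃ K : ℝ, 0 < K ∧ ∀ r : ℝ, 0 < r → ∀ j₀ : ℕ, 4*r ≤ (2:ℝ)^(-(j₀:ℝ)) →
      (∑ j ∈ Finset.range j₀, (2:ℝ)^((j:ℝ)*(3/4 - α))) * r^((3:ℝ)/4)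
        ≤ K * r^(min ((3:ℝ)/4) α) := by
  set q : ℝ := (2:ℝ)^((3:ℝ)/4 - α) with hq
  have hqpos : 0 < q := Real.rpow_pos_of_pos two_pos _
  have hsum : ∀ j₀ : ℕ, (∑ j ∈ Finset.range j₀, (2:ℝ)^((j:ℝ)*(3/4 - α)))
      = ∑ j ∈ Finset.range j₀, q ^ j := by
    intro j₀
    refine Finset.sum_congr rfl fun j _ => ?_
    rw [hq, ← Real.rpow_natCast ((2:ℝ)^((3:ℝ)/4 - α)) j, ← Real.rpow_mul (by norm_num)]
    ring_nf
  rcases lt_or_gt_of_ne hαne with hlt | hgt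
  · -- α < 3/4, q > 1
    have hq1 : 1 < q := by
      rw [hq]
      exact Real.one_lt_rpow_iff_of_pos two_pos |>.mpr (Or.inl ⟨one_lt_two, by linarith⟩)
    refine ⟨(4:ℝ)^(α - 3/4) / (q - 1), div_pos (Real.rpow_pos_of_pos (by norm_num) _)
      (by linarith), ?_⟩
    intro r hr j₀ hj₀
    rw [hsum, geom_sum_eq hq1.ne' j₀, min_eq_right hlt.le]
    have h2j : (2:ℝ)^((j₀:ℝ)) ≤ (4*r)⁻¹ := by
      have hrw : (2:ℝ)^(-(j₀:ℝ)) = ((2:ℝ)^((j₀:ℝ)))⁻¹ := Real.rpow_neg (by norm_num) _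
      rw [hrw] at hj₀
      exact (le_inv_comm₀ (by linarith) (Real.rpow_pos_of_pos two_pos _)).mp hj₀
    have hqj₀ : q ^ j₀ = ((2:ℝ)^((j₀:ℝ)))^((3:ℝ)/4 - α) := by
      rw [hq, ← Real.rpow_natCast ((2:ℝ)^((3:ℝ)/4 - α)) j₀, ← Real.rpow_mul (by norm_num),
        ← Real.rpow_mul (by norm_num)]
      ring_nf
    have h1 : q ^ j₀ ≤ ((4*r)⁻¹)^((3:ℝ)/4 - α) := by
      rw [hqj₀]
      exact Real.rpow_le_rpow (by positivity) h2j (by linarith)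
    have h2 : ((4*r)⁻¹)^((3:ℝ)/4 - α) = (4:ℝ)^(α - 3/4) * r ^ (α - 3/4) := by
      rw [Real.inv_rpow (by positivity), Real.mul_rpow (by norm_num) hr.le, mul_inv,
        ← Real.rpow_neg (by norm_num), ← Real.rpow_neg hr.le]
      norm_num
    have hqj : q ^ j₀ * r ^ ((3:ℝ)/4) ≤ (4:ℝ)^(α - 3/4) * r ^ α := by
      have h3 : r ^ (α - 3/4) * r ^ ((3:ℝ)/4) = r ^ α := by
        rw [← Real.rpow_add hr]; norm_num
      calc q ^ j₀ * r ^ ((3:ℝ)/4) ≤ ((4*r)⁻¹)^((3:ℝ)/4 - α) * r ^ ((3:ℝ)/4) :=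
            mul_le_mul_of_nonneg_right h1 (Real.rpow_nonneg hr.le _)
        _ = (4:ℝ)^(α - 3/4) * (r ^ (α - 3/4) * r ^ ((3:ℝ)/4)) := by rw [h2]; ring
        _ = (4:ℝ)^(α - 3/4) * r ^ α := by rw [h3]
    rw [div_mul_eq_mul_div, div_mul_eq_mul_div, div_le_div_iff_of_pos_right (by linarith)]
    nlinarith [Real.rpow_nonneg hr.le ((3:ℝ)/4)]
  · -- α > 3/4, q < 1
    have hq1 : q < 1 := Real.rpow_lt_one_of_one_lt_of_neg one_lt_two (by linarith)
    refine ⟨1/(1-q), div_pos one_pos (by linarith), ?_⟩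
    intro r hr j₀ hj₀
    rw [hsum, min_eq_left hgt.le]
    have hle : (∑ j ∈ Finset.range j₀, q ^ j) ≤ 1/(1-q) := by
      rw [geom_sum_eq hq1.ne j₀]
      have heq : (q ^ j₀ - 1)/(q - 1) = (1 - q ^ j₀)/(1 - q) := by
        rw [div_eq_div_iff (by linarith) (by linarith)]; ring
      rw [heq]
      gcongr
      · linarith [pow_nonneg hqpos.le j₀]
    exact mul_le_mul_of_nonneg_right hle (Real.rpow_nonneg hr.le _)

lemma annulus_bound (α : ℝ) (hα : 0 < α) (hα1 : α < 1) (j : ℕ) :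
    (2 * (2:ℝ)^(-(j:ℝ)))^α * (2:ℝ)^(3*((j:ℝ)+1)/4) ≤ 4 * (2:ℝ)^((j:ℝ)*(3/4 - α)) := by
  have e1 : (2 * (2:ℝ)^(-(j:ℝ)))^α = (2:ℝ)^(α + (-(j:ℝ))*α) := by
    rw [Real.mul_rpow (by norm_num) (Real.rpow_nonneg (by norm_num) _),
      ← Real.rpow_mul (by norm_num), ← Real.rpow_add two_pos]
  rw [e1, ← Real.rpow_add two_pos]
  have e2 : α + (-(j:ℝ))*α + 3*((j:ℝ)+1)/4 = (α + 3/4) + (j:ℝ)*(3/4 - α) := by ring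
  rw [e2, Real.rpow_add two_pos]
  have h4 : (2:ℝ)^((2:ℕ):ℝ) = 4 := by rw [Real.rpow_natCast]; norm_num
  have e3 : (2:ℝ)^(α + 3/4) ≤ 4 := by
    calc (2:ℝ)^(α + 3/4) ≤ (2:ℝ)^((2:ℕ):ℝ) :=
          Real.rpow_le_rpow_of_exponent_le one_le_two (by push_cast; linarith)
      _ = 4 := h4
  exact mul_le_mul_of_nonneg_right e3 (Real.rpow_nonneg (by norm_num) _)

set_option maxHeartbeats 1000000 in
/-- if the adjoint caloric measures `ω̂^{(X,t)}` of `Ω` satisfy the boundary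
growth estimate `1 - ω̂^{(X,t)}(Δ_{2^{-j}}(Q,τ)) ≤ C₀ 2^{3j/4} r^{3/4}` for
`‖(X,t)-(Q,τ)‖ ≤ r` and `2^{-j} ≥ 4r`, and `h` is parabolically Hölder continuous of
exponent `α ∈ (0,1)`, `α ≠ 3/4`, with Hölder norm `H` on `∂Ω`, then for
`‖(X,t)-(Q,τ)‖ ≤ r < 1/4`,
`∫_{Δ_{2R}(Q,τ)} h dω̂^{(X,t)} ≤ h(Q,τ) + C r^{min(3/4,α)}`. -/
theorem statement14 (n : ℕ) (α R C₀ H : ℝ)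
    (hα : 0 < α) (hα1 : α < 1) (hαne : α ≠ 3 / 4)
    (hR : 1 ≤ R) (hC₀ : 0 < C₀) (hH : 0 ≤ H) :
    ∃ C : ℝ, 0 < C ∧
      ∀ (Ω : Set (Pt n)) (ω : Pt n → Measure (Pt n)) (h : Pt n → ℝ),
        (∀ p ∈ Ω, IsProbabilityMeasure (ω p)) →
        Measurable h →
        (∀ p ∈ frontier Ω, |h p| ≤ H) →
        (∀ p ∈ frontier Ω, ∀ q ∈ frontier Ω, |h p - h q| ≤ H * pdist p q ^ α) →
        (∀ (X Q : Pt n) (r : ℝ) (j : ℕ), X ∈ Ω → Q ∈ frontier Ω → 0 < r →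
          pdist X Q ≤ r → 4 * r ≤ (2 : ℝ) ^ (-(j : ℝ)) →
          1 - (ω X (pcyl Q ((2 : ℝ) ^ (-(j : ℝ))) ∩ frontier Ω)).toReal ≤
            C₀ * 2 ^ (3 * (j : ℝ) / 4) * r ^ ((3 : ℝ) / 4)) →
        ∀ (X Q : Pt n) (r : ℝ), X ∈ Ω → Q ∈ frontier Ω → 0 < r → r < 1 / 4 →
          pdist X Q ≤ r →
          ∫ p in pcyl Q (2 * R) ∩ frontier Ω, h p ∂(ω X) ≤
            h Q + C * r ^ min ((3 : ℝ) / 4) α := by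
  obtain ⟨K, hK, hKey⟩ := geom_key α hαne
  refine ⟨16*H + 4*H*C₀*K + 3*H*C₀ + 1, by positivity, ?_⟩
  intro Ω ω h hprob hmeas hbd hHold hgrow X Q r hX hQ hrpos hr14 hdist
  haveI : IsProbabilityMeasure (ω X) := hprob X hX
  set μ : Measure (Pt n) := ω X with hμdef
  set ρ : ℕ → ℝ := fun j => (2:ℝ)^(-(j:ℝ)) with hρdef
  have hρpos : ∀ j, 0 < ρ j := fun j => Real.rpow_pos_of_pos two_pos _
  have hρanti : ∀ j k, j ≤ k → ρ k ≤ ρ j := fun j k hjk =>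
    Real.rpow_le_rpow_of_exponent_le one_le_two (neg_le_neg (Nat.cast_le.mpr hjk))
  have hρ0 : ρ 0 = 1 := by simp [hρdef]
  set B : ℕ → Set (Pt n) := fun j => pcyl Q (ρ j) ∩ frontier Ω with hBdef
  set E : Set (Pt n) := pcyl Q (2*R) ∩ frontier Ω with hEdef
  have hfrm : MeasurableSet (frontier Ω) := isClosed_frontier.measurableSet
  have hBm : ∀ j, MeasurableSet (B j) := fun j => (measurableSet_pcyl _ _).inter hfrm
  have hEm : MeasurableSet E := (measurableSet_pcyl _ _).inter hfrm
  have hBsub : ∀ j, B (j+1) ⊆ B j := fun j =>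
    inter_subset_inter_left _ (pcyl_mono _ (hρpos _).le (hρanti j (j+1) (Nat.le_succ j)))
  have hB0E : B 0 ⊆ E := inter_subset_inter_left _ (by
    rw [hρ0]; exact pcyl_mono _ zero_le_one (by linarith))
  -- choice of j₀
  have hex : ∃ k : ℕ, ρ (k+1) < 4*r := by
    obtain ⟨k, hk⟩ := exists_pow_lt_of_lt_one (show (0:ℝ) < 4*r by linarith)
      (show (1/2:ℝ) < 1 by norm_num)
    refine ⟨k, ?_⟩
    have hcast : ρ (k+1) = (1/2:ℝ)^(k+1) := two_rpow_neg_nat (k+1)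
    rw [hcast]
    calc (1/2:ℝ)^(k+1) ≤ (1/2:ℝ)^k :=
          pow_le_pow_of_le_one (by norm_num) (by norm_num) (Nat.le_succ k)
      _ < 4*r := hk
  set j₀ := Nat.find hex with hj₀def
  have hj₀lt : ρ (j₀+1) < 4*r := Nat.find_spec hex
  have hj₀ge : 4*r ≤ ρ j₀ := by
    rcases Nat.eq_zero_or_pos j₀ with h0 | hpos
    · rw [h0, hρ0]; linarith
    · have hmin : ¬ ρ ((j₀ - 1) + 1) < 4*r := Nat.find_min hex (by omega)
      have he : (j₀ - 1) + 1 = j₀ := by omega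
      rw [he] at hmin
      linarith [le_of_not_gt hmin]
  have hj₀r : ∀ j, j ≤ j₀ → 4*r ≤ ρ j := fun j hj => hj₀ge.trans (hρanti j j₀ hj)
  have hρj₀8 : ρ j₀ < 8 * r := by
    have hdouble : ρ j₀ = 2 * ρ (j₀+1) := by
      rw [show ρ j₀ = (1/2:ℝ)^j₀ from two_rpow_neg_nat j₀,
        show ρ (j₀+1) = (1/2:ℝ)^(j₀+1) from two_rpow_neg_nat (j₀+1), pow_succ]
      ring
    rw [hdouble]; linarith
  -- growth estimates
  have hgr : ∀ j, j ≤ j₀ → 1 - (μ (B j)).toReal ≤ C₀ * 2^(3*(j:ℝ)/4) * r^((3:ℝ)/4) :=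
    fun j hj => hgrow X Q r j hX hQ hrpos hdist (hj₀r j hj)
  -- measure arithmetic
  have hle1 : ∀ s : Set (Pt n), (μ s).toReal ≤ 1 := fun s => by
    calc (μ s).toReal ≤ (1:ℝ≥0∞).toReal := ENNReal.toReal_mono ENNReal.one_ne_top prob_le_one
      _ = 1 := ENNReal.toReal_one
  have hdisj_sum : ∀ s t : Set (Pt n), MeasurableSet t → Disjoint s t →
      (μ s).toReal ≤ 1 - (μ t).toReal := by
    intro s t ht hd
    have hu := measure_union (μ := μ) hd ht
    have h2 : (μ s).toReal + (μ t).toReal ≤ 1 := by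
      rw [← ENNReal.toReal_add (measure_ne_top μ s) (measure_ne_top μ t), ← hu]
      exact hle1 _
    linarith
  -- the integrand
  set f : Pt n → ℝ := fun p => |h p - h Q| with hfdef
  have hfmeas : Measurable f := (hmeas.sub measurable_const).abs
  have hHQ : |h Q| ≤ H := hbd Q hQ
  have hint : ∀ s : Set (Pt n), MeasurableSet s → s ⊆ frontier Ω → IntegrableOn f s μ := by
    intro s hs hsub
    refine integrableOn_of_bound μ f s hs hfmeas (2*H) ?_
    intro x hx
    rw [hfdef, abs_abs]
    calc |h x - h Q| ≤ |h x| + |h Q| := abs_sub _ _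
      _ ≤ 2*H := by have := hbd x (hsub hx); linarith
  -- pointwise Hölder bound on B j
  have hpt : ∀ j, ∀ p ∈ B j, |h p - h Q| ≤ H * (2 * ρ j)^α := by
    intro j p hp
    calc |h p - h Q| ≤ H * pdist p Q ^ α := hHold p hp.2 Q hQ
      _ ≤ H * (2 * ρ j)^α := mul_le_mul_of_nonneg_left
          (Real.rpow_le_rpow (pdist_nonneg' _ _)
            (pdist_le_of_mem_pcyl (hρpos j).le hp.1) hα.le) hH
  -- per-set integral bound
  have hsetbd : ∀ s : Set (Pt n), MeasurableSet s → s ⊆ frontier Ω → ∀ b M : ℝ,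
      0 ≤ b → (∀ p ∈ s, |h p - h Q| ≤ b) → (μ s).toReal ≤ M →
      ∫ p in s, f p ∂μ ≤ b * M := by
    intro s hs hsub b M hb hbnd hM
    calc ∫ p in s, f p ∂μ ≤ ∫ _p in s, b ∂μ :=
          setIntegral_mono_on (hint s hs hsub)
            (integrableOn_const (measure_lt_top μ s).ne) hs
            (fun x hx => hbnd x hx)
      _ = (μ s).toReal * b := by rw [setIntegral_const, smul_eq_mul, measureReal_def]
      _ ≤ M * b := mul_le_mul_of_nonneg_right hM hb
      _ = b * M := mul_comm _ _
  -- estimate on the inner ball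
  have hball : ∫ p in B j₀, f p ∂μ ≤ 16*H * r^α := by
    have hb := hpt j₀
    have hmain := hsetbd (B j₀) (hBm j₀) inter_subset_right (H * (2 * ρ j₀)^α) 1
      (by positivity) hb (hle1 _)
    have h16 : H * (2 * ρ j₀)^α ≤ 16*H*r^α := by
      have h1 : (2 * ρ j₀ : ℝ)^α ≤ (16*r)^α :=
        Real.rpow_le_rpow (by positivity) (by linarith) hα.le
      have h2 : (16*r : ℝ)^α = (16:ℝ)^α * r^α :=
        Real.mul_rpow (by norm_num) hrpos.le
      have h3 : (16:ℝ)^α ≤ 16 := by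
        calc (16:ℝ)^α ≤ (16:ℝ)^(1:ℝ) :=
              Real.rpow_le_rpow_of_exponent_le (by norm_num) hα1.le
          _ = 16 := Real.rpow_one 16
      have h5 : (0:ℝ) ≤ r^α := Real.rpow_nonneg hrpos.le α
      calc H * (2 * ρ j₀)^α ≤ H * ((16:ℝ)^α * r^α) := by
            rw [← h2]; exact mul_le_mul_of_nonneg_left h1 hH
        _ ≤ 16*H*r^α := by
            linarith [mul_le_mul_of_nonneg_left (mul_le_mul_of_nonneg_right h3 h5) hH]
    linarith
  -- estimate on the annuli
  have hann : ∀ j, j < j₀ → ∫ p in B j \ B (j+1), f p ∂μ ≤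
      (4*H*C₀) * (2:ℝ)^((j:ℝ)*(3/4 - α)) * r^((3:ℝ)/4) := by
    intro j hj
    have hM : (μ (B j \ B (j+1))).toReal ≤ C₀ * 2^(3*((j:ℝ)+1)/4) * r^((3:ℝ)/4) := by
      have h1 : (μ (B j \ B (j+1))).toReal ≤ 1 - (μ (B (j+1))).toReal :=
        hdisj_sum _ _ (hBm (j+1)) disjoint_sdiff_self_left
      have h2 := hgr (j+1) hj
      push_cast at h2
      linarith
    have hb : ∀ p ∈ B j \ B (j+1), |h p - h Q| ≤ H * (2 * ρ j)^α :=
      fun p hp => hpt j p hp.1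
    have hmain := hsetbd (B j \ B (j+1)) ((hBm j).diff (hBm (j+1)))
      ((diff_subset).trans inter_subset_right) (H * (2 * ρ j)^α)
      (C₀ * 2^(3*((j:ℝ)+1)/4) * r^((3:ℝ)/4)) (by positivity) hb hM
    have hab := annulus_bound α hα hα1 j
    have hrq : (0:ℝ) ≤ r^((3:ℝ)/4) := Real.rpow_nonneg hrpos.le _
    calc ∫ p in B j \ B (j+1), f p ∂μ
        ≤ H * (2 * ρ j)^α * (C₀ * 2^(3*((j:ℝ)+1)/4) * r^((3:ℝ)/4)) := hmain
      _ = H * C₀ * ((2 * ρ j)^α * 2^(3*((j:ℝ)+1)/4)) * r^((3:ℝ)/4) := by ring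
      _ ≤ H * C₀ * (4 * (2:ℝ)^((j:ℝ)*(3/4 - α))) * r^((3:ℝ)/4) := by
          have hHC : (0:ℝ) ≤ H * C₀ := by positivity
          exact mul_le_mul_of_nonneg_right (mul_le_mul_of_nonneg_left hab hHC) hrq
      _ = (4*H*C₀) * (2:ℝ)^((j:ℝ)*(3/4 - α)) * r^((3:ℝ)/4) := by ring
  -- scale-one growth estimate
  have hgr0 : 1 - (μ (B 0)).toReal ≤ C₀ * r^((3:ℝ)/4) := by
    have h0 := hgr 0 (Nat.zero_le _)
    norm_num at h0
    linarith
  -- far region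
  have hfar : ∫ p in E \ B 0, f p ∂μ ≤ 2*H * (C₀ * r^((3:ℝ)/4)) := by
    have hM : (μ (E \ B 0)).toReal ≤ C₀ * r^((3:ℝ)/4) := by
      have h1 := hdisj_sum (E \ B 0) (B 0) (hBm 0) disjoint_sdiff_self_left
      linarith
    have hb : ∀ p ∈ E \ B 0, |h p - h Q| ≤ 2*H := by
      intro p hp
      have h1 := hbd p hp.1.2
      calc |h p - h Q| ≤ |h p| + |h Q| := abs_sub _ _
        _ ≤ 2*H := by linarith
    exact hsetbd _ (hEm.diff (hBm 0)) ((diff_subset).trans inter_subset_right)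
      (2*H) _ (by positivity) hb hM
  -- base term
  set mE := (μ E).toReal with hmEdef
  set m0 := (μ (B 0)).toReal with hm0def
  have hm0E : m0 ≤ mE := ENNReal.toReal_mono (measure_ne_top μ E) (measure_mono hB0E)
  have hbase : h Q * mE ≤ h Q + H * (C₀ * r^((3:ℝ)/4)) := by
    have h1 : -H ≤ h Q := (abs_le.mp hHQ).1
    have h2 : mE ≤ 1 := hle1 E
    have e1 : (-H)*(1 - mE) ≤ h Q * (1 - mE) :=
      mul_le_mul_of_nonneg_right h1 (by linarith)
    have e2 : H*(1 - mE) ≤ H*(1 - m0) := mul_le_mul_of_nonneg_left (by linarith) hH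
    have e3 : H*(1 - m0) ≤ H*(C₀ * r^((3:ℝ)/4)) := mul_le_mul_of_nonneg_left hgr0 hH
    nlinarith
  -- splitting the integral
  have hEfr : E ⊆ frontier Ω := inter_subset_right
  have hintg : IntegrableOn (fun p => h p - h Q) E μ := by
    refine integrableOn_of_bound μ _ E hEm (hmeas.sub measurable_const) (2*H) ?_
    intro x hx
    have h1 := hbd x hx.2
    calc |h x - h Q| ≤ |h x| + |h Q| := abs_sub _ _
      _ ≤ 2*H := by linarith
  have hinth : IntegrableOn h E μ :=
    integrableOn_of_bound μ h E hEm hmeas H (fun x hx => hbd x hx.2)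
  have hsplit : ∫ p in E, h p ∂μ = (∫ p in E, (h p - h Q) ∂μ) + h Q * mE := by
    have hsub : ∫ p in E, (h p - h Q) ∂μ
        = (∫ p in E, h p ∂μ) - ∫ _p in E, h Q ∂μ :=
      integral_sub hinth (integrableOn_const (measure_lt_top μ E).ne)
    rw [setIntegral_const, smul_eq_mul, measureReal_def] at hsub
    rw [hsub]; ring
  have hgf : ∫ p in E, (h p - h Q) ∂μ ≤ ∫ p in E, f p ∂μ :=
    setIntegral_mono_on hintg (hint E hEm hEfr) hEm (fun x _ => le_abs_self _)
  have hsubE : E ⊆ (E \ B 0) ∪ B 0 := by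
    intro x hx; by_cases hb : x ∈ B 0
    · exact Or.inr hb
    · exact Or.inl ⟨hx, hb⟩
  have hunion_m : MeasurableSet ((E \ B 0) ∪ B 0) := (hEm.diff (hBm 0)).union (hBm 0)
  have hunion_sub : (E \ B 0) ∪ B 0 ⊆ frontier Ω :=
    union_subset ((diff_subset).trans hEfr) inter_subset_right
  have hEsplit : ∫ p in E, f p ∂μ ≤ (∫ p in E \ B 0, f p ∂μ) + ∫ p in B 0, f p ∂μ := by
    calc ∫ p in E, f p ∂μ ≤ ∫ p in (E \ B 0) ∪ B 0, f p ∂μ :=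
          setIntegral_mono_set (hint _ hunion_m hunion_sub)
            (Eventually.of_forall (fun x => abs_nonneg _))
            (HasSubset.Subset.eventuallyLE hsubE)
      _ = _ := setIntegral_union disjoint_sdiff_self_left (hBm 0)
            ((hint _ hunion_m hunion_sub).mono_set subset_union_left)
            ((hint _ hunion_m hunion_sub).mono_set subset_union_right)
  have hdecomp : ∫ p in B 0, f p ∂μ =
      (∑ j ∈ Finset.range j₀, ∫ p in B j \ B (j+1), f p ∂μ) + ∫ p in B j₀, f p ∂μ :=
    integral_decomp μ f B hBm hBsub (fun j => hint _ (hBm j) inter_subset_right) j₀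
  have hsumbd : (∑ j ∈ Finset.range j₀, ∫ p in B j \ B (j+1), f p ∂μ)
      ≤ (4*H*C₀) * (K * r^(min ((3:ℝ)/4) α)) := by
    calc (∑ j ∈ Finset.range j₀, ∫ p in B j \ B (j+1), f p ∂μ)
        ≤ ∑ j ∈ Finset.range j₀, (4*H*C₀) * (2:ℝ)^((j:ℝ)*(3/4 - α)) * r^((3:ℝ)/4) :=
          Finset.sum_le_sum (fun j hj => hann j (Finset.mem_range.mp hj))
      _ = (4*H*C₀) * ((∑ j ∈ Finset.range j₀, (2:ℝ)^((j:ℝ)*(3/4 - α))) * r^((3:ℝ)/4)) := by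
          rw [← Finset.sum_mul, ← Finset.mul_sum, mul_assoc]
      _ ≤ (4*H*C₀) * (K * r^(min ((3:ℝ)/4) α)) :=
          mul_le_mul_of_nonneg_left (hKey r hrpos j₀ hj₀ge) (by positivity)
  -- wrap up
  have hral : r^α ≤ r^(min ((3:ℝ)/4) α) :=
    Real.rpow_le_rpow_of_exponent_ge hrpos (by linarith) (min_le_right _ _)
  have hr34 : r^((3:ℝ)/4) ≤ r^(min ((3:ℝ)/4) α) :=
    Real.rpow_le_rpow_of_exponent_ge hrpos (by linarith) (min_le_left _ _)
  have hrm : 0 ≤ r^(min ((3:ℝ)/4) α) := Real.rpow_nonneg hrpos.le _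
  have t1 : 16*H*r^α ≤ 16*H*r^(min ((3:ℝ)/4) α) := by
    have := mul_le_mul_of_nonneg_left hral (show (0:ℝ) ≤ 16*H by positivity)
    linarith
  have t2 : 2*H*(C₀ * r^((3:ℝ)/4)) ≤ 2*H*C₀*r^(min ((3:ℝ)/4) α) := by
    calc 2*H*(C₀ * r^((3:ℝ)/4)) = (2*H*C₀) * r^((3:ℝ)/4) := by ring
      _ ≤ (2*H*C₀) * r^(min ((3:ℝ)/4) α) :=
          mul_le_mul_of_nonneg_left hr34 (by positivity)
      _ = 2*H*C₀*r^(min ((3:ℝ)/4) α) := by ring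
  have t3 : H*(C₀ * r^((3:ℝ)/4)) ≤ H*C₀*r^(min ((3:ℝ)/4) α) := by
    calc H*(C₀ * r^((3:ℝ)/4)) = (H*C₀) * r^((3:ℝ)/4) := by ring
      _ ≤ (H*C₀) * r^(min ((3:ℝ)/4) α) :=
          mul_le_mul_of_nonneg_left hr34 (by positivity)
      _ = H*C₀*r^(min ((3:ℝ)/4) α) := by ring
  calc ∫ p in E, h p ∂μ = (∫ p in E, (h p - h Q) ∂μ) + h Q * mE := hsplit
    _ ≤ (∫ p in E, f p ∂μ) + (h Q + H * (C₀ * r^((3:ℝ)/4))) := by linarith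
    _ ≤ ((∫ p in E \ B 0, f p ∂μ) + ∫ p in B 0, f p ∂μ)
          + (h Q + H * (C₀ * r^((3:ℝ)/4))) := by linarith
    _ ≤ h Q + (16*H + 4*H*C₀*K + 3*H*C₀ + 1) * r ^ min ((3:ℝ)/4) α := by
          rw [hdecomp]
          have e4 : (4*H*C₀) * (K * r^(min ((3:ℝ)/4) α))
              = 4*H*C₀*K*r^(min ((3:ℝ)/4) α) := by ring
          linarith [hfar, hball, hsumbd, t1, t2, t3, hrm, e4.le, e4.ge]
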